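/- For every p with 2 ≤ p < ∞ there is a constant c > 0 such that for all integers n, M, N ≥ 1 and every f : {0,…,N−1} → ℝ^M with ‖f(j)‖_{L_p^M} ≤ 1 for all j, the Monte Carlo method satisfies N^{−n} · Σ_{(t_1,…,t_n) ∈ {0,…,N−1}^n} ‖ S_N f − (1/n) Σ_{l=1}^n f(t_l) ‖_{L_p^M} ≤ c·n^{−1/2}; in particular the randomized error of mean computation in L_p^M with n samples is at most c·n^{−1/2}, uniformly in M and N. -/

import Mathlib

variable {ι : Type*} [Fintype ι] [Nonempty ι]

lemma unif_sum_one : ∑ _i : ι, (Fintype.card ι : ℝ)⁻¹ = 1 := by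
  rw [Finset.sum_const, Finset.card_univ, nsmul_eq_mul, mul_inv_cancel₀]
  exact_mod_cast Fintype.card_ne_zero

lemma unif_pow_le (z : ι → ℝ) (hz : ∀ i, 0 ≤ z i) {q : ℝ} (hq : 1 ≤ q) :
    ((Fintype.card ι : ℝ)⁻¹ * ∑ i, z i) ^ q ≤ (Fintype.card ι : ℝ)⁻¹ * ∑ i, z i ^ q := by
  have h := Real.rpow_arith_mean_le_arith_mean_rpow Finset.univ
    (fun _ : ι => (Fintype.card ι : ℝ)⁻¹) z (fun i _ => by positivity)
    unif_sum_one (fun i _ => hz i) hq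
  simpa [Finset.mul_sum] using h

lemma unif_le_rpow (z : ι → ℝ) (hz : ∀ i, 0 ≤ z i) {q : ℝ} (hq : 1 ≤ q) :
    (Fintype.card ι : ℝ)⁻¹ * ∑ i, z i ≤ ((Fintype.card ι : ℝ)⁻¹ * ∑ i, z i ^ q) ^ (1/q) := by
  have h := Real.arith_mean_le_rpow_mean Finset.univ
    (fun _ : ι => (Fintype.card ι : ℝ)⁻¹) z (fun i _ => by positivity)
    unif_sum_one (fun i _ => hz i) hq
  simpa [Finset.mul_sum] using h

lemma two_point_rpow (x y : ℝ) {q : ℝ} (hq : 1 ≤ q) :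
    |x + y| ^ q ≤ 2 ^ (q - 1) * (|x| ^ q + |y| ^ q) := by
  have h2 : ((Fintype.card (Fin 2) : ℝ))⁻¹ = 2⁻¹ := by norm_num
  have h := unif_pow_le (ι := Fin 2) ![|x|, |y|] (fun i => by fin_cases i <;> simp [abs_nonneg]) hq
  simp only [h2, Fin.sum_univ_two, Matrix.cons_val_zero, Matrix.cons_val_one,
    Matrix.head_cons] at h
  have habs : |x + y| ≤ |x| + |y| := abs_add_le x y
  have h0 : (0:ℝ) ≤ |x| + |y| := by positivity
  calc |x + y| ^ q ≤ (|x| + |y|) ^ q :=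
        Real.rpow_le_rpow (abs_nonneg _) habs (by linarith)
    _ = (2 * (2⁻¹ * (|x| + |y|))) ^ q := by ring_nf
    _ = 2 ^ q * (2⁻¹ * (|x| + |y|)) ^ q := by
        rw [Real.mul_rpow (by norm_num) (by positivity)]
    _ ≤ 2 ^ q * (2⁻¹ * (|x| ^ q + |y| ^ q)) := by
        apply mul_le_mul_of_nonneg_left h (by positivity)
    _ = 2 ^ (q - 1) * (|x| ^ q + |y| ^ q) := by
        rw [Real.rpow_sub (by norm_num), Real.rpow_one]; ring

lemma pow_le_two_cosh (x : ℝ) (m : ℕ) :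
    x ^ (2 * m) / (Nat.factorial (2 * m) : ℝ) ≤ 2 * Real.cosh x := by
  have h1 : |x| ^ (2 * m) / (Nat.factorial (2 * m) : ℝ) ≤ Real.exp |x| := by
    have := Real.sum_le_exp_of_nonneg (abs_nonneg x) (2 * m + 1)
    refine le_trans ?_ this
    exact Finset.single_le_sum (f := fun i => |x| ^ i / (Nat.factorial i : ℝ))
      (fun i _ => by positivity) (Finset.self_mem_range_succ (2 * m))
  have h2 : Real.exp |x| ≤ Real.exp x + Real.exp (-x) := by
    rcases abs_cases x with ⟨h, _⟩ | ⟨h, _⟩ <;> rw [h] <;>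
      [exact le_add_of_nonneg_right (Real.exp_pos _).le;
       exact le_add_of_nonneg_left (Real.exp_pos _).le]
  have h3 : |x| ^ (2 * m) = x ^ (2 * m) := by
    rw [pow_mul, pow_mul, sq_abs]
  rw [Real.cosh_eq]
  rw [h3] at h1
  linarith

noncomputable def sg (b : Bool) : ℝ := if b then 1 else -1

lemma sum_exp_signs {n : ℕ} (b : Fin n → ℝ) :
    ∑ ε : Fin n → Bool, Real.exp (∑ l, sg (ε l) * b l) = ∏ l, (2 * Real.cosh (b l)) := by
  calc ∑ ε : Fin n → Bool, Real.exp (∑ l, sg (ε l) * b l)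
      = ∑ ε : Fin n → Bool, ∏ l, Real.exp (sg (ε l) * b l) := by
        simp_rw [Real.exp_sum]
    _ = ∑ ε ∈ Fintype.piFinset (fun _ : Fin n => (Finset.univ : Finset Bool)),
          ∏ l, Real.exp (sg (ε l) * b l) := by rw [Fintype.piFinset_univ]
    _ = ∏ l, ∑ v : Bool, Real.exp (sg v * b l) :=
        (Finset.prod_univ_sum (fun _ : Fin n => (Finset.univ : Finset Bool))
          (fun l v => Real.exp (sg v * b l))).symm
    _ = ∏ l, (2 * Real.cosh (b l)) := by
        refine Finset.prod_congr rfl fun l _ => ?_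
        rw [Real.cosh_eq]
        simp [sg]
        ring

lemma even_moment_bound {n : ℕ} (m : ℕ) (hm : 1 ≤ m) (a : Fin n → ℝ)
    (hσ : 0 < ∑ l, a l ^ 2) :
    ((2:ℝ)^n)⁻¹ * ∑ ε : Fin n → Bool, (∑ l, sg (ε l) * a l) ^ (2*m)
      ≤ 2 * ((2*m*Real.exp 1) * ∑ l, a l ^ 2)^m := by
  set σ2 := ∑ l, a l ^ 2 with hσ2
  have hc0 : (0:ℝ) < 2*(m:ℝ) := by positivity
  set lam := Real.sqrt (2*m / σ2) with hlam
  have hlam2 : lam ^ 2 = 2*m/σ2 := Real.sq_sqrt (by positivity)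
  -- pointwise bound
  have key : ∀ X : ℝ, X ^ (2*m) ≤
      (σ2/(2*m))^m * (2 * (Nat.factorial (2*m) : ℝ) * Real.cosh (lam * X)) := by
    intro X
    have h := pow_le_two_cosh (lam * X) m
    have hexp : (lam * X) ^ (2*m) = (2*(m:ℝ)/σ2)^m * X^(2*m) := by
      rw [mul_pow, pow_mul, hlam2]
    have h' : (2*(m:ℝ)/σ2)^m * X^(2*m) ≤ 2 * (Nat.factorial (2*m) : ℝ) * Real.cosh (lam * X) := by
      rw [← hexp]
      rw [div_le_iff₀ (by positivity)] at h
      linarith [h]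
    have hcancel : (σ2/(2*(m:ℝ)))^m * (2*(m:ℝ)/σ2)^m = 1 := by
      rw [← mul_pow, div_mul_div_comm]
      rw [mul_comm σ2 _, div_self (by positivity), one_pow]
    calc X ^ (2*m) = (σ2/(2*(m:ℝ)))^m * ((2*(m:ℝ)/σ2)^m * X^(2*m)) := by
          rw [← mul_assoc, hcancel, one_mul]
      _ ≤ (σ2/(2*(m:ℝ)))^m * (2 * (Nat.factorial (2*m) : ℝ) * Real.cosh (lam * X)) :=
          mul_le_mul_of_nonneg_left h' (by positivity)
  -- sum of cosh
  have hcosh_sum : ((2:ℝ)^n)⁻¹ * ∑ ε : Fin n → Bool, Real.cosh (lam * ∑ l, sg (ε l) * a l)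
      ≤ Real.exp m := by
    have e1 : ∑ ε : Fin n → Bool, Real.exp (lam * ∑ l, sg (ε l) * a l)
        = ∏ l, (2 * Real.cosh (lam * a l)) := by
      have := sum_exp_signs (fun l => lam * a l)
      rw [← this]
      refine Finset.sum_congr rfl fun ε _ => ?_
      rw [Finset.mul_sum]
      congr 1
      exact Finset.sum_congr rfl fun l _ => by ring
    have e2 : ∑ ε : Fin n → Bool, Real.exp (-(lam * ∑ l, sg (ε l) * a l))
        = ∏ l, (2 * Real.cosh (lam * a l)) := by
      have := sum_exp_signs (fun l => -(lam * a l))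
      simp only [Real.cosh_neg] at this
      rw [← this]
      refine Finset.sum_congr rfl fun ε _ => ?_
      congr 1
      rw [Finset.mul_sum, ← Finset.sum_neg_distrib]
      refine Finset.sum_congr rfl fun l _ => by ring
    have e3 : ∑ ε : Fin n → Bool, Real.cosh (lam * ∑ l, sg (ε l) * a l)
        = ∏ l, (2 * Real.cosh (lam * a l)) := by
      have e0 : ∑ ε : Fin n → Bool, Real.cosh (lam * ∑ l, sg (ε l) * a l)
          = ∑ ε : Fin n → Bool, (Real.exp (lam * ∑ l, sg (ε l) * a l)
              + Real.exp (-(lam * ∑ l, sg (ε l) * a l)))/2 :=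
        Finset.sum_congr rfl fun ε _ => Real.cosh_eq _
      rw [e0, ← Finset.sum_div, Finset.sum_add_distrib, e1, e2]
      ring
    rw [e3, Finset.prod_mul_distrib, Finset.prod_const, Finset.card_univ, Fintype.card_fin,
      ← mul_assoc, inv_mul_cancel₀ (by positivity), one_mul]
    calc ∏ l, Real.cosh (lam * a l) ≤ ∏ l, Real.exp ((lam * a l)^2/2) := by
          refine Finset.prod_le_prod (fun l _ => (Real.cosh_pos _).le) fun l _ =>
            Real.cosh_le_exp_half_sq _
      _ = Real.exp (∑ l, (lam * a l)^2/2) := by rw [← Real.exp_sum]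
      _ = Real.exp m := by
          congr 1
          have : ∑ l, (lam * a l)^2/2 = lam^2 * σ2 / 2 := by
            rw [hσ2, Finset.mul_sum, Finset.sum_div]
            refine Finset.sum_congr rfl fun l _ => by ring
          rw [this, hlam2]
          field_simp
  -- combine
  have hsum : ((2:ℝ)^n)⁻¹ * ∑ ε : Fin n → Bool, (∑ l, sg (ε l) * a l) ^ (2*m)
      ≤ (σ2/(2*(m:ℝ)))^m * (2 * (Nat.factorial (2*m) : ℝ)) * Real.exp m := by
    calc ((2:ℝ)^n)⁻¹ * ∑ ε : Fin n → Bool, (∑ l, sg (ε l) * a l) ^ (2*m)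
        ≤ ((2:ℝ)^n)⁻¹ * ∑ ε : Fin n → Bool,
            (σ2/(2*(m:ℝ)))^m * (2 * (Nat.factorial (2*m) : ℝ) * Real.cosh (lam * ∑ l, sg (ε l) * a l)) := by
          refine mul_le_mul_of_nonneg_left (Finset.sum_le_sum fun ε _ => key _) (by positivity)
      _ = (σ2/(2*(m:ℝ)))^m * (2 * (Nat.factorial (2*m) : ℝ)) *
            (((2:ℝ)^n)⁻¹ * ∑ ε : Fin n → Bool, Real.cosh (lam * ∑ l, sg (ε l) * a l)) := by
          rw [← Finset.mul_sum, ← Finset.mul_sum]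
          ring
      _ ≤ (σ2/(2*(m:ℝ)))^m * (2 * (Nat.factorial (2*m) : ℝ)) * Real.exp m :=
          mul_le_mul_of_nonneg_left hcosh_sum (by positivity)
  refine hsum.trans ?_
  have hfact : (Nat.factorial (2*m) : ℝ) ≤ (2*(m:ℝ))^(2*m) := by
    have := Nat.factorial_le_pow (2*m)
    calc (Nat.factorial (2*m) : ℝ) ≤ ((2*m)^(2*m) : ℕ) := by exact_mod_cast this
      _ = (2*(m:ℝ))^(2*m) := by push_cast; ring
  have hexpm : Real.exp m = (Real.exp 1)^m := by
    rw [← Real.exp_nat_mul]; norm_num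
  calc (σ2/(2*(m:ℝ)))^m * (2 * (Nat.factorial (2*m) : ℝ)) * Real.exp m
      ≤ (σ2/(2*(m:ℝ)))^m * (2 * (2*(m:ℝ))^(2*m)) * Real.exp m := by
        refine mul_le_mul_of_nonneg_right (mul_le_mul_of_nonneg_left (by linarith) (by positivity)) (Real.exp_pos _).le
    _ = 2 * ((2*m*Real.exp 1) * σ2)^m := by
        rw [div_pow]
        field_simp
        rw [hexpm]
        ring

lemma khintchine {n : ℕ} (m : ℕ) (hm : 1 ≤ m) {p : ℝ} (hp2 : 2 ≤ p) (hpm : p ≤ 2*m)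
    (a : Fin n → ℝ) :
    ((2:ℝ)^n)⁻¹ * ∑ ε : Fin n → Bool, |∑ l, sg (ε l) * a l| ^ p
      ≤ (4*m*Real.exp 1)^(p/2) * (∑ l, a l ^ 2)^(p/2) := by
  have hp0 : 0 < p := by linarith
  have hm0 : (1:ℝ) ≤ m := by exact_mod_cast hm
  rcases eq_or_lt_of_le (show (0:ℝ) ≤ ∑ l, a l ^ 2 from
      Finset.sum_nonneg fun l _ => sq_nonneg _) with hσ | hσ
  · have hz : ∀ l, a l = 0 := by
      intro l
      have h0 := (Finset.sum_eq_zero_iff_of_nonneg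
        (fun l _ => sq_nonneg (a l))).1 hσ.symm l (Finset.mem_univ l)
      exact pow_eq_zero_iff (by norm_num) |>.1 h0
    have hX : ∀ ε : Fin n → Bool, (∑ l, sg (ε l) * a l) = 0 := fun ε =>
      Finset.sum_eq_zero fun l _ => by rw [hz]; ring
    rw [← hσ]
    simp [hX, Real.zero_rpow (ne_of_gt hp0),
      Real.zero_rpow (show p/2 ≠ 0 by positivity)]
  · have hq : 1 ≤ 2*(m:ℝ)/p := by
      rw [le_div_iff₀ hp0]; linarith
    have hcard : ((Fintype.card (Fin n → Bool) : ℕ) : ℝ) = 2^n := by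
      simp [Fintype.card_fun]
    have jensen := unif_le_rpow (ι := Fin n → Bool)
      (fun ε => |∑ l, sg (ε l) * a l| ^ p)
      (fun ε => Real.rpow_nonneg (abs_nonneg _) _) hq
    rw [hcard] at jensen
    have hzq : ∀ ε : Fin n → Bool, (|∑ l, sg (ε l) * a l| ^ p) ^ (2*(m:ℝ)/p)
        = (∑ l, sg (ε l) * a l) ^ (2*m) := by
      intro ε
      rw [← Even.pow_abs (even_two_mul m),
        ← Real.rpow_natCast |∑ l, sg (ε l) * a l| (2*m),
        ← Real.rpow_mul (abs_nonneg _)]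
      congr 1
      push_cast
      field_simp
    simp only [hzq] at jensen
    have h1 : (1:ℝ)/(2*(m:ℝ)/p) = p/(2*(m:ℝ)) := one_div_div _ _
    rw [h1] at jensen
    have hemb := even_moment_bound m hm a hσ
    have hnn : (0:ℝ) ≤ ((2:ℝ)^n)⁻¹ * ∑ ε : Fin n → Bool, (∑ l, sg (ε l) * a l) ^ (2*m) :=
      mul_nonneg (by positivity)
        (Finset.sum_nonneg fun ε _ => (even_two_mul m).pow_nonneg _)
    set σ2 := ∑ l, a l ^ 2 with hσ2
    calc ((2:ℝ)^n)⁻¹ * ∑ ε : Fin n → Bool, |∑ l, sg (ε l) * a l| ^ p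
        ≤ (((2:ℝ)^n)⁻¹ * ∑ ε : Fin n → Bool, (∑ l, sg (ε l) * a l) ^ (2*m)) ^ (p/(2*(m:ℝ))) :=
          jensen
      _ ≤ (2 * ((2*(m:ℝ)*Real.exp 1) * σ2)^m) ^ (p/(2*(m:ℝ))) :=
          Real.rpow_le_rpow hnn hemb (by positivity)
      _ ≤ (4*m*Real.exp 1)^(p/2) * σ2^(p/2) := by
          rw [Real.mul_rpow (by norm_num) (by positivity),
            ← Real.rpow_natCast ((2*(m:ℝ)*Real.exp 1) * σ2) m,
            ← Real.rpow_mul (by positivity)]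
          have hme : (m:ℝ) * (p/(2*(m:ℝ))) = p/2 := by
            field_simp
          rw [hme]
          have h2 : (2:ℝ)^(p/(2*(m:ℝ))) ≤ 2^(p/2) := by
            apply Real.rpow_le_rpow_of_exponent_le one_le_two
            apply div_le_div_of_nonneg_left hp0.le two_pos
            linarith
          calc (2:ℝ)^(p/(2*(m:ℝ))) * ((2*(m:ℝ)*Real.exp 1) * σ2)^(p/2)
              ≤ 2^(p/2) * ((2*(m:ℝ)*Real.exp 1) * σ2)^(p/2) :=
                mul_le_mul_of_nonneg_right h2 (Real.rpow_nonneg (by positivity) _)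
            _ = (2*((2*(m:ℝ)*Real.exp 1) * σ2))^(p/2) :=
                (Real.mul_rpow (by norm_num) (by positivity)).symm
            _ = (4*m*Real.exp 1)^(p/2) * σ2^(p/2) := by
                rw [show (2:ℝ)*((2*(m:ℝ)*Real.exp 1) * σ2) = (4*m*Real.exp 1)*σ2 by ring,
                  Real.mul_rpow (by positivity) hσ.le]

lemma marginal_sum {n : ℕ} {K : Type*} [Fintype K] (l : Fin n) (F : K → ℝ) :
    ∑ s : Fin n → K, F (s l) =
      (Fintype.card ({ j : Fin n // j ≠ l } → K) : ℝ) * ∑ v, F v := by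
  rw [← Equiv.sum_comp (Equiv.funSplitAt l K).symm (fun s => F (s l))]
  have : ∀ q : K × ({ j : Fin n // j ≠ l } → K),
      F (((Equiv.funSplitAt l K).symm q) l) = F q.1 := by
    intro q
    congr 1
    have := (Equiv.funSplitAt l K).apply_symm_apply q
    have h1 : ((Equiv.funSplitAt l K) ((Equiv.funSplitAt l K).symm q)).1 = q.1 := by rw [this]
    simpa using h1
  rw [Finset.sum_congr rfl fun q _ => this q]
  rw [Fintype.sum_prod_type]
  simp [Finset.sum_const, Finset.card_univ, mul_comm, Finset.sum_mul]

lemma card_fun_split {n : ℕ} {K : Type*} [Fintype K] (l : Fin n) :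
    Fintype.card (Fin n → K) =
      Fintype.card K * Fintype.card ({ j : Fin n // j ≠ l } → K) := by
  rw [Fintype.card_congr (Equiv.funSplitAt l K), Fintype.card_prod]

lemma power_mean_sq {n : ℕ} (hn : 1 ≤ n) (b : Fin n → ℝ) {p : ℝ} (hp2 : 2 ≤ p) :
    (∑ l, b l ^ 2) ^ (p/2) ≤ (n:ℝ)^(p/2-1) * ∑ l, |b l| ^ p := by
  haveI : Nonempty (Fin n) := ⟨⟨0, hn⟩⟩
  have hq : (1:ℝ) ≤ p/2 := by linarith
  have hn0 : (0:ℝ) < n := by exact_mod_cast hn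
  have key := unif_pow_le (ι := Fin n) (fun l => b l ^ 2) (fun l => sq_nonneg _) hq
  rw [Fintype.card_fin] at key
  have hsq : ∀ l, ((b l ^ 2 : ℝ)) ^ (p/2) = |b l| ^ p := by
    intro l
    rw [← sq_abs, ← Real.rpow_natCast |b l| 2, ← Real.rpow_mul (abs_nonneg _)]
    congr 1
    push_cast
    ring
  simp only [hsq] at key
  have hnn : (0:ℝ) ≤ (n:ℝ)⁻¹ * ∑ l, b l ^ 2 :=
    mul_nonneg (by positivity) (Finset.sum_nonneg fun l _ => sq_nonneg _)
  calc (∑ l, b l ^ 2) ^ (p/2)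
      = ((n:ℝ) * ((n:ℝ)⁻¹ * ∑ l, b l ^ 2)) ^ (p/2) := by
        rw [← mul_assoc, mul_inv_cancel₀ hn0.ne', one_mul]
    _ = (n:ℝ)^(p/2) * ((n:ℝ)⁻¹ * ∑ l, b l ^ 2) ^ (p/2) :=
        Real.mul_rpow hn0.le hnn
    _ ≤ (n:ℝ)^(p/2) * ((n:ℝ)⁻¹ * ∑ l, |b l| ^ p) :=
        mul_le_mul_of_nonneg_left key (Real.rpow_nonneg hn0.le _)
    _ = (n:ℝ)^(p/2-1) * ∑ l, |b l| ^ p := by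
        rw [Real.rpow_sub hn0, Real.rpow_one]
        field_simp

lemma pair_bound {N : ℕ} (hN : 1 ≤ N) (g : Fin N → ℝ) {p : ℝ} (hp2 : 2 ≤ p) :
    ((N:ℝ)*N)⁻¹ * ∑ v : Fin N × Fin N, |g v.1 - g v.2| ^ p
      ≤ 2^p * ((N:ℝ)⁻¹ * ∑ j, |g j| ^ p) := by
  have hN0 : (0:ℝ) < N := by exact_mod_cast hN
  have h1 : ∑ v : Fin N × Fin N, |g v.1 - g v.2| ^ p
      ≤ ∑ v : Fin N × Fin N, 2^(p-1) * (|g v.1| ^ p + |g v.2| ^ p) := by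
    refine Finset.sum_le_sum fun v _ => ?_
    have := two_point_rpow (g v.1) (-(g v.2)) (by linarith : (1:ℝ) ≤ p)
    simpa [sub_eq_add_neg] using this
  have h2 : ∑ v : Fin N × Fin N, ((2:ℝ)^(p-1) * (|g v.1| ^ p + |g v.2| ^ p))
      = 2^(p-1) * (2 * ((N:ℝ) * ∑ j, |g j| ^ p)) := by
    rw [← Finset.mul_sum, Fintype.sum_prod_type]
    congr 1
    rw [Finset.sum_congr rfl fun j (_ : j ∈ Finset.univ) =>
      (Finset.sum_add_distrib (s := Finset.univ)
        (f := fun k : Fin N => |g j| ^ p) (g := fun k : Fin N => |g k| ^ p))]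
    rw [Finset.sum_add_distrib]
    simp only [Finset.sum_const, Finset.card_univ, Fintype.card_fin, nsmul_eq_mul]
    rw [← Finset.mul_sum]
    ring
  calc ((N:ℝ)*N)⁻¹ * ∑ v : Fin N × Fin N, |g v.1 - g v.2| ^ p
      ≤ ((N:ℝ)*N)⁻¹ * (2^(p-1) * (2 * ((N:ℝ) * ∑ j, |g j| ^ p))) := by
        refine mul_le_mul_of_nonneg_left (h1.trans (le_of_eq h2)) (by positivity)
    _ = 2^p * ((N:ℝ)⁻¹ * ∑ j, |g j| ^ p) := by
        rw [show (2:ℝ)^p = 2^(p-1) * 2 by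
          rw [← Real.rpow_add_one (by norm_num : (2:ℝ) ≠ 0) (p-1)]; norm_num]
        field_simp

lemma mz {N n : ℕ} (hN : 1 ≤ N) (hn : 1 ≤ n) (m : ℕ) (hm : 1 ≤ m) {p : ℝ}
    (hp2 : 2 ≤ p) (hpm : p ≤ 2*(m:ℝ)) (g : Fin N → ℝ) (hg : ∑ j, g j = 0) :
    ((N:ℝ)^n)⁻¹ * ∑ t : Fin n → Fin N, |∑ l, g (t l)| ^ p
      ≤ (4*(m:ℝ)*Real.exp 1)^(p/2) * 2^p * (n:ℝ)^(p/2) * ((N:ℝ)⁻¹ * ∑ j, |g j| ^ p) := by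
  haveI : Nonempty (Fin N) := ⟨⟨0, hN⟩⟩
  have hN0 : (0:ℝ) < N := by exact_mod_cast hN
  have hn0 : (0:ℝ) < n := by exact_mod_cast hn
  have hp0 : (0:ℝ) < p := by linarith
  have hcard : ((Fintype.card (Fin n → Fin N) : ℕ) : ℝ) = (N:ℝ)^n := by
    simp [Fintype.card_fun]
  -- Step A: symmetrization
  have hA : ∀ t : Fin n → Fin N, |∑ l, g (t l)| ^ p
      ≤ ((N:ℝ)^n)⁻¹ * ∑ s : Fin n → Fin N, |∑ l, (g (t l) - g (s l))| ^ p := by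
    intro t
    have e1 : ∑ s : Fin n → Fin N, ∑ l, (g (t l) - g (s l)) = (N:ℝ)^n * ∑ l, g (t l) := by
      have h1 : ∀ s : Fin n → Fin N, ∑ l, (g (t l) - g (s l))
          = ∑ l, g (t l) - ∑ l, g (s l) := fun s => Finset.sum_sub_distrib _ _
      rw [Finset.sum_congr rfl fun s _ => h1 s, Finset.sum_sub_distrib, Finset.sum_const,
        Finset.card_univ, Finset.sum_comm]
      rw [Finset.sum_congr rfl fun l (_ : l ∈ Finset.univ) => marginal_sum l g]
      simp [hg, nsmul_eq_mul, hcard]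
    have hmean : ∑ l, g (t l) = ((N:ℝ)^n)⁻¹ * ∑ s : Fin n → Fin N, ∑ l, (g (t l) - g (s l)) := by
      rw [e1, ← mul_assoc, inv_mul_cancel₀ (by positivity), one_mul]
    have key := unif_pow_le (ι := Fin n → Fin N)
      (fun s => |∑ l, (g (t l) - g (s l))|) (fun s => abs_nonneg _) (by linarith : (1:ℝ) ≤ p)
    rw [hcard] at key
    calc |∑ l, g (t l)| ^ p
        = |((N:ℝ)^n)⁻¹ * ∑ s : Fin n → Fin N, ∑ l, (g (t l) - g (s l))| ^ p := by rw [← hmean]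
      _ ≤ (((N:ℝ)^n)⁻¹ * ∑ s : Fin n → Fin N, |∑ l, (g (t l) - g (s l))|) ^ p := by
          refine Real.rpow_le_rpow (abs_nonneg _) ?_ hp0.le
          rw [abs_mul, abs_inv, abs_pow, abs_of_nonneg hN0.le]
          exact mul_le_mul_of_nonneg_left (Finset.abs_sum_le_sum_abs _ _) (by positivity)
      _ ≤ ((N:ℝ)^n)⁻¹ * ∑ s : Fin n → Fin N, |∑ l, (g (t l) - g (s l))| ^ p := key
  -- Step B: pairs as functions into product type
  have hpair : ∑ t : Fin n → Fin N, ∑ s : Fin n → Fin N, |∑ l, (g (t l) - g (s l))| ^ p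
      = ∑ u : Fin n → Fin N × Fin N, |∑ l, (g ((u l).1) - g ((u l).2))| ^ p := by
    have h1 : ∑ q : (Fin n → Fin N) × (Fin n → Fin N), |∑ l, (g (q.1 l) - g (q.2 l))| ^ p
        = ∑ t : Fin n → Fin N, ∑ s : Fin n → Fin N, |∑ l, (g (t l) - g (s l))| ^ p :=
      Fintype.sum_prod_type _
    rw [← h1]
    rw [← Equiv.sum_comp (Equiv.arrowProdEquivProdArrow (Fin n) (fun _ => Fin N) (fun _ => Fin N))
      (fun q : (Fin n → Fin N) × (Fin n → Fin N) => |∑ l, (g (q.1 l) - g (q.2 l))| ^ p)]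
    rfl
  -- Step C: sign invariance
  have hsign : ∀ ε : Fin n → Bool,
      ∑ u : Fin n → Fin N × Fin N, |∑ l, (g ((u l).1) - g ((u l).2))| ^ p
      = ∑ u : Fin n → Fin N × Fin N, |∑ l, sg (ε l) * (g ((u l).1) - g ((u l).2))| ^ p := by
    intro ε
    have hinv : Function.Involutive
        (fun u : Fin n → Fin N × Fin N => fun l => if ε l then Prod.swap (u l) else u l) := by
      intro u; funext l; by_cases h : ε l <;> simp [h]
    rw [← Equiv.sum_comp (hinv.toPerm _)
      (fun u : Fin n → Fin N × Fin N => |∑ l, sg (ε l) * (g ((u l).1) - g ((u l).2))| ^ p)]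
    refine Finset.sum_congr rfl fun u _ => ?_
    have hterm : ∑ l, sg (ε l) * (g (((hinv.toPerm _) u l).1) - g (((hinv.toPerm _) u l).2))
        = - ∑ l, (g ((u l).1) - g ((u l).2)) := by
      rw [← Finset.sum_neg_distrib]
      refine Finset.sum_congr rfl fun l _ => ?_
      simp only [Function.Involutive.coe_toPerm]
      by_cases h : ε l <;> simp [sg, h] <;> ring
    simp only [Function.Involutive.coe_toPerm] at hterm ⊢
    rw [hterm, abs_neg]
  -- Step C': average over signs and apply Khintchine
  have hkh : ∀ u : Fin n → Fin N × Fin N,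
      ((2:ℝ)^n)⁻¹ * ∑ ε : Fin n → Bool, |∑ l, sg (ε l) * (g ((u l).1) - g ((u l).2))| ^ p
        ≤ (4*(m:ℝ)*Real.exp 1)^(p/2) * (∑ l, (g ((u l).1) - g ((u l).2)) ^ 2)^(p/2) :=
    fun u => khintchine m hm hp2 hpm _
  have havg : ∑ u : Fin n → Fin N × Fin N, |∑ l, (g ((u l).1) - g ((u l).2))| ^ p
      = ∑ u : Fin n → Fin N × Fin N,
          ((2:ℝ)^n)⁻¹ * ∑ ε : Fin n → Bool, |∑ l, sg (ε l) * (g ((u l).1) - g ((u l).2))| ^ p := by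
    have : ∑ ε : Fin n → Bool, ∑ u : Fin n → Fin N × Fin N,
        |∑ l, sg (ε l) * (g ((u l).1) - g ((u l).2))| ^ p
        = (2:ℝ)^n * ∑ u : Fin n → Fin N × Fin N, |∑ l, (g ((u l).1) - g ((u l).2))| ^ p := by
      rw [Finset.sum_congr rfl fun ε (_ : ε ∈ Finset.univ) => (hsign ε).symm, Finset.sum_const,
        Finset.card_univ, nsmul_eq_mul]
      congr 1
      simp [Fintype.card_fun]
    rw [← Finset.mul_sum, Finset.sum_comm, this, ← mul_assoc, inv_mul_cancel₀ (by positivity),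
      one_mul]
  -- Step E: marginal reduction
  have hKcard : ((Fintype.card (Fin N × Fin N)) : ℝ) = (N:ℝ)*N := by
    simp [Fintype.card_prod]
  have hcards : ∀ l : Fin n, ((Fintype.card ({ j : Fin n // j ≠ l } → Fin N × Fin N)) : ℝ)
      = ((Fintype.card (Fin n → Fin N × Fin N)) : ℝ) / ((N:ℝ)*N) := by
    intro l
    rw [card_fun_split l]
    push_cast
    rw [hKcard]
    field_simp
  have hmarg : ∑ u : Fin n → Fin N × Fin N, ∑ l, |g ((u l).1) - g ((u l).2)| ^ p
      = (Fintype.card (Fin n → Fin N × Fin N) : ℝ) * ((((N:ℝ))*N)⁻¹ *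
          ((n:ℝ) * ∑ v : Fin N × Fin N, |g v.1 - g v.2| ^ p)) := by
    rw [Finset.sum_comm]
    rw [Finset.sum_congr rfl fun l (_ : l ∈ Finset.univ) =>
      marginal_sum l (fun v : Fin N × Fin N => |g v.1 - g v.2| ^ p)]
    rw [Finset.sum_congr rfl fun l (_ : l ∈ Finset.univ) => by rw [hcards l]]
    rw [Finset.sum_const, Finset.card_univ, Fintype.card_fin, nsmul_eq_mul]
    field_simp
  have hCF : (Fintype.card (Fin n → Fin N × Fin N) : ℝ) = (N:ℝ)^n * (N:ℝ)^n := by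
    rw [Fintype.card_fun]
    push_cast
    rw [Fintype.card_prod, Fintype.card_fin, Fintype.card_fin]
    push_cast
    rw [mul_pow]
  have hCFpos : (0:ℝ) < (Fintype.card (Fin n → Fin N × Fin N) : ℝ) := by
    rw [hCF]; positivity
  have hrn : (n:ℝ)^(p/2-1) * (n:ℝ) = (n:ℝ)^(p/2) := by
    rw [Real.rpow_sub hn0, Real.rpow_one]
    field_simp
  calc ((N:ℝ)^n)⁻¹ * ∑ t : Fin n → Fin N, |∑ l, g (t l)| ^ p
      ≤ ((N:ℝ)^n)⁻¹ * ∑ t : Fin n → Fin N,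
          (((N:ℝ)^n)⁻¹ * ∑ s : Fin n → Fin N, |∑ l, (g (t l) - g (s l))| ^ p) :=
        mul_le_mul_of_nonneg_left (Finset.sum_le_sum fun t _ => hA t) (by positivity)
    _ = (Fintype.card (Fin n → Fin N × Fin N) : ℝ)⁻¹ *
          ∑ u : Fin n → Fin N × Fin N, |∑ l, (g ((u l).1) - g ((u l).2))| ^ p := by
        rw [← Finset.mul_sum, hpair, hCF]
        ring
    _ = (Fintype.card (Fin n → Fin N × Fin N) : ℝ)⁻¹ *
          ∑ u : Fin n → Fin N × Fin N, (((2:ℝ)^n)⁻¹ *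
            ∑ ε : Fin n → Bool, |∑ l, sg (ε l) * (g ((u l).1) - g ((u l).2))| ^ p) := by
        rw [havg]
    _ ≤ (Fintype.card (Fin n → Fin N × Fin N) : ℝ)⁻¹ *
          ∑ u : Fin n → Fin N × Fin N,
            ((4*(m:ℝ)*Real.exp 1)^(p/2) * ((n:ℝ)^(p/2-1) * ∑ l, |g ((u l).1) - g ((u l).2)| ^ p)) := by
        refine mul_le_mul_of_nonneg_left (Finset.sum_le_sum fun u _ => ?_) (by positivity)
        refine (hkh u).trans ?_
        exact mul_le_mul_of_nonneg_left (power_mean_sq hn _ hp2)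
          (Real.rpow_nonneg (by positivity) _)
    _ = (4*(m:ℝ)*Real.exp 1)^(p/2) * (n:ℝ)^(p/2-1) *
          ((Fintype.card (Fin n → Fin N × Fin N) : ℝ)⁻¹ *
            ∑ u : Fin n → Fin N × Fin N, ∑ l, |g ((u l).1) - g ((u l).2)| ^ p) := by
        rw [← Finset.mul_sum, ← Finset.mul_sum]
        ring
    _ = (4*(m:ℝ)*Real.exp 1)^(p/2) * (n:ℝ)^(p/2-1) * ((n:ℝ) *
          (((N:ℝ)*N)⁻¹ * ∑ v : Fin N × Fin N, |g v.1 - g v.2| ^ p)) := by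
        rw [hmarg, inv_mul_cancel_left₀ hCFpos.ne']
        ring
    _ ≤ (4*(m:ℝ)*Real.exp 1)^(p/2) * (n:ℝ)^(p/2-1) * ((n:ℝ) *
          (2^p * ((N:ℝ)⁻¹ * ∑ j, |g j| ^ p))) := by
        refine mul_le_mul_of_nonneg_left
          (mul_le_mul_of_nonneg_left (pair_bound hN g hp2) hn0.le) (by positivity)
    _ = (4*(m:ℝ)*Real.exp 1)^(p/2) * 2^p * (n:ℝ)^(p/2) * ((N:ℝ)⁻¹ * ∑ j, |g j| ^ p) := by
        rw [← hrn]
        ring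

lemma swap_avg {A B : Type*} [Fintype A] [Fintype B] (c d : ℝ) (F : A → B → ℝ) :
    c * ∑ a, (d * ∑ b, F a b) = d * ∑ b, (c * ∑ a, F a b) := by
  simp only [← Finset.mul_sum]
  rw [Finset.sum_comm]
  ring

/-- The normalized `L_p^M` norm on `ℝ^M`: `‖x‖ = ((1/M) ∑ i, |x i|^p)^(1/p)`. -/
noncomputable def lpNorm (p : ℝ) (M : ℕ) (x : Fin M → ℝ) : ℝ :=
  ((M : ℝ)⁻¹ * ∑ i, |x i| ^ p) ^ (1 / p)

/-- For every `2 ≤ p < ∞` there is a constant `c > 0` such that for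
all `n, M, N ≥ 1` and every `f : {0,…,N−1} → ℝ^M` with `‖f j‖_{L_p^M} ≤ 1`, the
average (over all `n`-tuples of sample points) `L_p^M` error of the Monte Carlo
method for the mean `S_N f = (1/N) ∑ j, f j` is at most `c·n^(-1/2)`,
uniformly in `M` and `N`. -/
theorem mc_upper_lp_high (p : ℝ) (hp : 2 ≤ p) :
    ∃ c : ℝ, 0 < c ∧
      ∀ (n M N : ℕ), 1 ≤ n → 1 ≤ M → 1 ≤ N →
        ∀ f : Fin N → Fin M → ℝ, (∀ j, lpNorm p M (f j) ≤ 1) →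
          ((N : ℝ) ^ n)⁻¹ *
              ∑ t : Fin n → Fin N,
                lpNorm p M ((N : ℝ)⁻¹ • ∑ j, f j - (n : ℝ)⁻¹ • ∑ l, f (t l))
            ≤ c * (n : ℝ) ^ (-(1 / 2 : ℝ)) := by
  have hp0 : (0:ℝ) < p := by linarith
  have hpne : p ≠ 0 := hp0.ne'
  set m : ℕ := ⌈p⌉₊ with hmdef
  have hm : 1 ≤ m := Nat.one_le_ceil_iff.mpr hp0
  have hm0 : (0:ℝ) ≤ (m:ℝ) := by positivity
  have hpm : p ≤ 2*(m:ℝ) := by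
    have := Nat.le_ceil p
    rw [← hmdef] at this
    linarith
  refine ⟨4 * (4*(m:ℝ)*Real.exp 1) ^ ((1:ℝ)/2), by positivity, ?_⟩
  intro n M N hn hM hN f hf
  haveI : Nonempty (Fin N) := ⟨⟨0, hN⟩⟩
  haveI : Nonempty (Fin M) := ⟨⟨0, hM⟩⟩
  have hN0 : (0:ℝ) < N := by exact_mod_cast hN
  have hM0 : (0:ℝ) < M := by exact_mod_cast hM
  have hn0 : (0:ℝ) < n := by exact_mod_cast hn
  set S : Fin M → ℝ := fun i => (N:ℝ)⁻¹ * ∑ j, f j i with hS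
  set g : Fin M → Fin N → ℝ := fun i j => f j i - S i with hg
  have hgsum : ∀ i, ∑ j, g i j = 0 := by
    intro i
    rw [hg]
    simp only [Finset.sum_sub_distrib, Finset.sum_const, Finset.card_univ, Fintype.card_fin,
      nsmul_eq_mul, hS]
    field_simp
    ring
  -- pointwise formula for the error vector
  have habs : ∀ (t : Fin n → Fin N) (i : Fin M),
      |((N:ℝ)⁻¹ • ∑ j, f j - (n:ℝ)⁻¹ • ∑ l, f (t l)) i| = (n:ℝ)⁻¹ * |∑ l, g i (t l)| := by
    intro t i
    have h1 : ((N:ℝ)⁻¹ • ∑ j, f j - (n:ℝ)⁻¹ • ∑ l, f (t l)) i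
        = -((n:ℝ)⁻¹ * ∑ l, g i (t l)) := by
      simp only [Pi.sub_apply, Pi.smul_apply, Finset.sum_apply, smul_eq_mul, hg, hS,
        Finset.sum_sub_distrib, Finset.sum_const, Finset.card_univ, Fintype.card_fin,
        nsmul_eq_mul]
      field_simp
      ring
    rw [h1, abs_neg, abs_mul, abs_inv, Nat.abs_cast]
  -- hypothesis in power form
  have hfp : ∀ j, (M:ℝ)⁻¹ * ∑ i, |f j i| ^ p ≤ 1 := by
    intro j
    have hQ : (0:ℝ) ≤ (M:ℝ)⁻¹ * ∑ i, |f j i| ^ p :=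
      mul_nonneg (by positivity) (Finset.sum_nonneg fun i _ => Real.rpow_nonneg (abs_nonneg _) _)
    have h2 : (((M:ℝ)⁻¹ * ∑ i, |f j i| ^ p) ^ (p⁻¹)) ^ p = (M:ℝ)⁻¹ * ∑ i, |f j i| ^ p :=
      Real.rpow_inv_rpow hQ hpne
    rw [← h2]
    have h3 := hf j
    rw [lpNorm, one_div] at h3
    calc (((M:ℝ)⁻¹ * ∑ i, |f j i| ^ p) ^ (p⁻¹)) ^ p ≤ 1 ^ p :=
          Real.rpow_le_rpow (Real.rpow_nonneg hQ _) h3 hp0.le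
      _ = 1 := Real.one_rpow p
  -- the mean has norm at most one
  have hSi : ∀ i, |S i| ^ p ≤ (N:ℝ)⁻¹ * ∑ j, |f j i| ^ p := by
    intro i
    have key := unif_pow_le (ι := Fin N) (fun j => |f j i|) (fun j => abs_nonneg _)
      (by linarith : (1:ℝ) ≤ p)
    rw [Fintype.card_fin] at key
    refine le_trans ?_ key
    refine Real.rpow_le_rpow (abs_nonneg _) ?_ hp0.le
    rw [hS]
    calc |(N:ℝ)⁻¹ * ∑ j, f j i| = (N:ℝ)⁻¹ * |∑ j, f j i| := by
          rw [abs_mul, abs_inv, Nat.abs_cast]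
      _ ≤ (N:ℝ)⁻¹ * ∑ j, |f j i| :=
          mul_le_mul_of_nonneg_left (Finset.abs_sum_le_sum_abs _ _) (by positivity)
  have hS1 : (M:ℝ)⁻¹ * ∑ i, |S i| ^ p ≤ 1 := by
    calc (M:ℝ)⁻¹ * ∑ i, |S i| ^ p
        ≤ (M:ℝ)⁻¹ * ∑ i, ((N:ℝ)⁻¹ * ∑ j, |f j i| ^ p) :=
          mul_le_mul_of_nonneg_left (Finset.sum_le_sum fun i _ => hSi i) (by positivity)
      _ = (N:ℝ)⁻¹ * ∑ j, ((M:ℝ)⁻¹ * ∑ i, |f j i| ^ p) := swap_avg _ _ _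
      _ ≤ (N:ℝ)⁻¹ * ∑ j : Fin N, (1:ℝ) :=
          mul_le_mul_of_nonneg_left (Finset.sum_le_sum fun j _ => hfp j) (by positivity)
      _ = 1 := by
          rw [Finset.sum_const, Finset.card_univ, Fintype.card_fin, nsmul_eq_mul, mul_one,
            inv_mul_cancel₀ hN0.ne']
  -- centered moments bounded by 2^p
  have hgj : ∀ j, (M:ℝ)⁻¹ * ∑ i, |g i j| ^ p ≤ 2 ^ p := by
    intro j
    have h1 : ∀ i, |g i j| ^ p ≤ 2^(p-1) * (|f j i| ^ p + |S i| ^ p) := by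
      intro i
      have := two_point_rpow (f j i) (-(S i)) (by linarith : (1:ℝ) ≤ p)
      simpa [hg, sub_eq_add_neg] using this
    calc (M:ℝ)⁻¹ * ∑ i, |g i j| ^ p
        ≤ (M:ℝ)⁻¹ * ∑ i, (2^(p-1) * (|f j i| ^ p + |S i| ^ p)) :=
          mul_le_mul_of_nonneg_left (Finset.sum_le_sum fun i _ => h1 i) (by positivity)
      _ = 2^(p-1) * ((M:ℝ)⁻¹ * ∑ i, |f j i| ^ p + (M:ℝ)⁻¹ * ∑ i, |S i| ^ p) := by
          rw [← Finset.mul_sum, Finset.sum_add_distrib]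
          ring
      _ ≤ 2^(p-1) * (1 + 1) := by
          refine mul_le_mul_of_nonneg_left (add_le_add (hfp j) hS1) (by positivity)
      _ = 2 ^ p := by
          rw [show (1:ℝ)+1 = 2 by norm_num,
            ← Real.rpow_add_one (by norm_num : (2:ℝ) ≠ 0) (p-1)]
          norm_num
  -- rewrite the goal using the pointwise formula
  have hlp : ∀ t : Fin n → Fin N,
      lpNorm p M ((N:ℝ)⁻¹ • ∑ j, f j - (n:ℝ)⁻¹ • ∑ l, f (t l))
        = ((M:ℝ)⁻¹ * ∑ i, ((n:ℝ)⁻¹ * |∑ l, g i (t l)|) ^ p) ^ (1/p) := by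
    intro t
    rw [lpNorm]
    congr 2
    exact Finset.sum_congr rfl fun i _ => by rw [habs t i]
  have hcard : ((Fintype.card (Fin n → Fin N) : ℕ) : ℝ) = (N:ℝ)^n := by
    simp [Fintype.card_fun]
  have hz0 : ∀ t : Fin n → Fin N, (0:ℝ) ≤ (M:ℝ)⁻¹ * ∑ i, ((n:ℝ)⁻¹ * |∑ l, g i (t l)|) ^ p :=
    fun t => mul_nonneg (by positivity)
      (Finset.sum_nonneg fun i _ => Real.rpow_nonneg (by positivity) _)
  have jensen := unif_le_rpow (ι := Fin n → Fin N)
    (fun t => ((M:ℝ)⁻¹ * ∑ i, ((n:ℝ)⁻¹ * |∑ l, g i (t l)|) ^ p) ^ (1/p))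
    (fun t => Real.rpow_nonneg (hz0 t) _) (by linarith : (1:ℝ) ≤ p)
  rw [hcard] at jensen
  have hzp : ∀ t : Fin n → Fin N,
      (((M:ℝ)⁻¹ * ∑ i, ((n:ℝ)⁻¹ * |∑ l, g i (t l)|) ^ p) ^ (1/p)) ^ p
        = (M:ℝ)⁻¹ * ∑ i, ((n:ℝ)⁻¹ * |∑ l, g i (t l)|) ^ p := by
    intro t
    rw [one_div, Real.rpow_inv_rpow (hz0 t) hpne]
  simp only [hzp] at jensen
  set K : ℝ := (4*(m:ℝ)*Real.exp 1)^(p/2) * 2^p * (n:ℝ)^(p/2) with hK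
  have hK0 : (0:ℝ) ≤ K := by
    rw [hK]; positivity
  have hinner : ((N:ℝ)^n)⁻¹ * ∑ t : Fin n → Fin N,
      ((M:ℝ)⁻¹ * ∑ i, ((n:ℝ)⁻¹ * |∑ l, g i (t l)|) ^ p)
      ≤ ((n:ℝ)⁻¹)^p * K * 2^p := by
    have e1 : ∀ (t : Fin n → Fin N) (i : Fin M),
        ((n:ℝ)⁻¹ * |∑ l, g i (t l)|) ^ p = ((n:ℝ)⁻¹)^p * |∑ l, g i (t l)| ^ p :=
      fun t i => Real.mul_rpow (by positivity) (abs_nonneg _)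
    calc ((N:ℝ)^n)⁻¹ * ∑ t : Fin n → Fin N, ((M:ℝ)⁻¹ * ∑ i, ((n:ℝ)⁻¹ * |∑ l, g i (t l)|) ^ p)
        = (M:ℝ)⁻¹ * ∑ i, (((N:ℝ)^n)⁻¹ * ∑ t : Fin n → Fin N, ((n:ℝ)⁻¹ * |∑ l, g i (t l)|) ^ p) :=
          swap_avg _ _ _
      _ = (M:ℝ)⁻¹ * ∑ i, (((n:ℝ)⁻¹)^p *
            (((N:ℝ)^n)⁻¹ * ∑ t : Fin n → Fin N, |∑ l, g i (t l)| ^ p)) := by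
          refine congrArg _ (Finset.sum_congr rfl fun i _ => ?_)
          rw [Finset.sum_congr rfl fun t _ => e1 t i, ← Finset.mul_sum]
          ring
      _ ≤ (M:ℝ)⁻¹ * ∑ i, (((n:ℝ)⁻¹)^p * (K * ((N:ℝ)⁻¹ * ∑ j, |g i j| ^ p))) := by
          refine mul_le_mul_of_nonneg_left (Finset.sum_le_sum fun i _ => ?_) (by positivity)
          refine mul_le_mul_of_nonneg_left ?_ (by positivity)
          rw [hK, mul_assoc ((4*(m:ℝ)*Real.exp 1)^(p/2) * 2^p) _ _, ← mul_assoc]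
          exact mz hN hn m hm hp hpm (g i) (hgsum i)
      _ = ((n:ℝ)⁻¹)^p * K * ((M:ℝ)⁻¹ * ∑ i, ((N:ℝ)⁻¹ * ∑ j, |g i j| ^ p)) := by
          rw [Finset.sum_congr rfl fun i (_ : i ∈ Finset.univ) =>
            (mul_assoc (((n:ℝ)⁻¹)^p) K _).symm, ← Finset.mul_sum]
          ring
      _ ≤ ((n:ℝ)⁻¹)^p * K * 2^p := by
          refine mul_le_mul_of_nonneg_left ?_ (mul_nonneg (by positivity) hK0)
          calc (M:ℝ)⁻¹ * ∑ i, ((N:ℝ)⁻¹ * ∑ j, |g i j| ^ p)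
              = (N:ℝ)⁻¹ * ∑ j, ((M:ℝ)⁻¹ * ∑ i, |g i j| ^ p) := swap_avg _ _ _
            _ ≤ (N:ℝ)⁻¹ * ∑ _j : Fin N, (2:ℝ)^p :=
                mul_le_mul_of_nonneg_left (Finset.sum_le_sum fun j _ => hgj j) (by positivity)
            _ = 2^p := by
                rw [Finset.sum_const, Finset.card_univ, Fintype.card_fin, nsmul_eq_mul,
                  ← mul_assoc, inv_mul_cancel₀ hN0.ne', one_mul]
  have hbase : ((n:ℝ)⁻¹)^p * K * 2^p
      = (4 * (4*(m:ℝ)*Real.exp 1)^((1:ℝ)/2) * (n:ℝ)^(-(1/2:ℝ)))^p := by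
    have hA0 : (0:ℝ) < 4*(m:ℝ)*Real.exp 1 := by positivity
    have lhs1 : ((n:ℝ)⁻¹)^p * K * 2^p
        = (4*(m:ℝ)*Real.exp 1)^(p/2) * (2^p * 2^p) * (((n:ℝ)⁻¹)^p * (n:ℝ)^(p/2)) := by
      rw [hK]; ring
    have h2 : (2:ℝ)^p * 2^p = (4:ℝ)^p := by
      rw [← Real.mul_rpow (by norm_num) (by norm_num)]
      norm_num
    have h3 : ((n:ℝ)⁻¹)^p * (n:ℝ)^(p/2) = (n:ℝ)^(-(p/2)) := by
      rw [Real.inv_rpow hn0.le, ← Real.rpow_neg hn0.le, ← Real.rpow_add hn0]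
      congr 1
      ring
    have h4 : ((4:ℝ) * (4*(m:ℝ)*Real.exp 1)^((1:ℝ)/2) * (n:ℝ)^(-(1/2:ℝ)))^p
        = (4:ℝ)^p * (4*(m:ℝ)*Real.exp 1)^(p/2) * (n:ℝ)^(-(p/2)) := by
      rw [Real.mul_rpow (by positivity) (Real.rpow_nonneg hn0.le _),
        Real.mul_rpow (by norm_num) (Real.rpow_nonneg hA0.le _),
        ← Real.rpow_mul hA0.le, ← Real.rpow_mul hn0.le]
      congr 2
      · ring
      · ring
    rw [lhs1, h2, h3, h4]
    ring
  simp only [hlp]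
  refine le_trans jensen ?_
  have hfin : (((N:ℝ)^n)⁻¹ * ∑ t : Fin n → Fin N,
      ((M:ℝ)⁻¹ * ∑ i, ((n:ℝ)⁻¹ * |∑ l, g i (t l)|) ^ p)) ^ (1/p)
      ≤ (((n:ℝ)⁻¹)^p * K * 2^p) ^ (1/p) := by
    refine Real.rpow_le_rpow ?_ hinner (by positivity)
    exact mul_nonneg (by positivity) (Finset.sum_nonneg fun t _ => hz0 t)
  refine le_trans hfin (le_of_eq ?_)
  rw [hbase, one_div p, Real.rpow_rpow_inv (by positivity) hpne]
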